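/- Let u be a 1-balanced sequence over {a, b} in which the letter a has frequency α ∈ (0, 1), let 𝐚 : ℕ → 𝒜 and 𝐛 : ℕ → ℬ be sequences over disjoint alphabets, and let v = colour(u, 𝐚, 𝐛). Then for every n ∈ ℕ, the factor complexities satisfy 𝒞_v(n) ≤ (n+1) · 𝒞_𝐚(⌈αn⌉) · 𝒞_𝐛(⌈(1−α)n⌉). -/

import Mathlib

open Finset Filter Topology

/-- Number of occurrences of the letter `c` in the factor of `u` of length `n`
starting at position `i`, i.e. `#{t : i ≤ t < i+n, u t = c}`. -/
def cnt {A : Type*} [DecidableEq A] (u : ℕ → A) (c : A) (i n : ℕ) : ℕ :=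
  ((Finset.Ico i (i + n)).filter (fun t => u t = c)).card

/-- A sequence `u` is `k`-balanced if the numbers of occurrences of any letter in
any two factors of the same length differ by at most `k`. -/
def IsBalanced {A : Type*} [DecidableEq A] (k : ℕ) (u : ℕ → A) : Prop :=
  ∀ i j n : ℕ, ∀ c : A, ((cnt u c i n : ℤ) - (cnt u c j n : ℤ)).natAbs ≤ k

/-- The letter `c` has frequency `f` in the sequence `u`. -/
def HasFreq {A : Type*} [DecidableEq A] (u : ℕ → A) (c : A) (f : ℝ) : Prop :=
  Tendsto (fun n : ℕ => (cnt u c 0 n : ℝ) / n) atTop (𝓝 f)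

/-- Colouring of a binary sequence `u` (letter `a` is `true`, letter `b` is `false`)
by a sequence `va` over `A` and a sequence `vb` over `B` (disjoint alphabets,
realized as the two summands of `A ⊕ B`): the `n`-th occurrence of `a` in `u`
is replaced by `va n`, and the `n`-th occurrence of `b` by `vb n`. -/
def colour {A B : Type*} (u : ℕ → Bool) (va : ℕ → A) (vb : ℕ → B) (N : ℕ) : A ⊕ B :=
  if u N then Sum.inl (va (cnt u true 0 N)) else Sum.inr (vb (cnt u false 0 N))

/-- The factor complexity of `u`: the number of distinct words of length `n`
occurring as factors of `u`. -/
noncomputable def complexity {A : Type*} (u : ℕ → A) (n : ℕ) : ℕ :=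
  Set.ncard {w : Fin n → A | ∃ i : ℕ, ∀ t : Fin n, w t = u (i + t)}

namespace ColourAux

variable {A : Type*} [DecidableEq A]

lemma cnt_zero (u : ℕ → A) (c : A) (i : ℕ) : cnt u c i 0 = 0 := by
  simp [cnt]

lemma cnt_add (u : ℕ → A) (c : A) (i m k : ℕ) :
    cnt u c i (m + k) = cnt u c i m + cnt u c (i + m) k := by
  unfold cnt
  have h : Finset.Ico i (i + (m + k)) =
      Finset.Ico i (i + m) ∪ Finset.Ico (i + m) (i + m + k) := by
    rw [Finset.Ico_union_Ico_eq_Ico (by omega) (by omega)]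
    congr 1; omega
  rw [h, Finset.filter_union, Finset.card_union_of_disjoint]
  exact Finset.disjoint_filter_filter (Finset.Ico_disjoint_Ico_consecutive _ _ _)

lemma cnt_one (u : ℕ → A) (c : A) (i : ℕ) :
    cnt u c i 1 = if u i = c then 1 else 0 := by
  have h : Finset.Ico i (i + 1) = {i} := by
    ext x; simp [Finset.mem_Ico]
  rw [cnt, h, Finset.filter_singleton]
  split_ifs <;> simp

lemma cnt_succ (u : ℕ → A) (c : A) (i m : ℕ) :
    cnt u c i (m + 1) = cnt u c i m + (if u (i + m) = c then 1 else 0) := by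
  rw [cnt_add, cnt_one]

lemma cnt_le (u : ℕ → A) (c : A) (i m : ℕ) : cnt u c i m ≤ m := by
  calc cnt u c i m ≤ (Finset.Ico i (i + m)).card :=
        Finset.card_filter_le _ _
    _ = m := by rw [Nat.card_Ico]; omega

lemma cnt_mono_len (u : ℕ → A) (c : A) (i : ℕ) {m m' : ℕ} (h : m ≤ m') :
    cnt u c i m ≤ cnt u c i m' := by
  have : cnt u c i m' = cnt u c i m + cnt u c (i + m) (m' - m) := by
    rw [← cnt_add]; congr 1; omega
  omega

lemma cnt_congr {u u' : ℕ → A} (c : A) {i j m : ℕ}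
    (h : ∀ t < m, u (i + t) = u' (j + t)) :
    cnt u c i m = cnt u' c j m := by
  induction m with
  | zero => simp [cnt_zero]
  | succ m ih =>
    rw [cnt_succ, cnt_succ, ih (fun t ht => h t (by omega)), h m (by omega)]

lemma cnt_true_add_false (u : ℕ → Bool) (i m : ℕ) :
    cnt u true i m + cnt u false i m = m := by
  induction m with
  | zero => simp [cnt_zero]
  | succ m ih =>
    rw [cnt_succ, cnt_succ]
    cases h : u (i + m) <;> simp [h] <;> omega

lemma bal' {u : ℕ → A} (hbal : IsBalanced 1 u) (c : A) (i j m : ℕ) :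
    (cnt u c i m : ℤ) ≤ (cnt u c j m : ℤ) + 1 := by
  have := hbal i j m c
  omega


/-- The key discrepancy bound: in a 1-balanced sequence with frequency `f` for
letter `c`, every window of length `m` has count within 1 of `f*m`. -/
lemma discrepancy {u : ℕ → Bool} {c : Bool} {f : ℝ} (hbal : IsBalanced 1 u)
    (hfreq : HasFreq u c f) (i m : ℕ) :
    |(cnt u c i m : ℝ) - f * m| ≤ 1 := by
  rcases Nat.eq_zero_or_pos m with hm | hm
  · subst hm; simp [cnt_zero]
  set r : ℕ := cnt u c i m with hr
  -- counts of aligned blocks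
  have hblocks : ∀ k : ℕ, ((k : ℤ) * ((r : ℤ) - 1) ≤ (cnt u c 0 (k * m) : ℤ)) ∧
      ((cnt u c 0 (k * m) : ℤ) ≤ (k : ℤ) * ((r : ℤ) + 1)) := by
    intro k
    induction k with
    | zero => simp [cnt_zero]
    | succ k ih =>
      have hsplit : cnt u c 0 ((k + 1) * m) = cnt u c 0 (k * m) + cnt u c (k * m) m := by
        have : (k + 1) * m = k * m + m := by ring
        rw [this, cnt_add]
        simp
      have h1 := bal' hbal c (k * m) i m
      have h2 := bal' hbal c i (k * m) m
      rw [hsplit]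
      push_cast
      push_cast at ih
      constructor <;> nlinarith [ih.1, ih.2]
  -- the subsequence along multiples of m tends to f
  have htend : Tendsto (fun k : ℕ => (cnt u c 0 (k * m) : ℝ) / (k * m)) atTop (𝓝 f) := by
    have hcomp : Tendsto (fun k : ℕ => k * m) atTop atTop :=
      tendsto_atTop_mono (fun k => Nat.le_mul_of_pos_right k hm) tendsto_id
    have := hfreq.comp hcomp
    refine this.congr (fun k => ?_)
    simp only [Function.comp_apply]
    norm_cast
  have hlb : ((r : ℝ) - 1) / m ≤ f := by
    refine ge_of_tendsto htend ?_
    filter_upwards [eventually_ge_atTop 1] with k hk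
    have hb := (hblocks k).1
    have hbr : ((k : ℝ) * ((r : ℝ) - 1) ≤ (cnt u c 0 (k * m) : ℝ)) := by
      exact_mod_cast hb
    rw [div_le_div_iff₀ (by positivity) (by positivity)]
    push_cast
    nlinarith [hbr]
  have hub : f ≤ ((r : ℝ) + 1) / m := by
    refine le_of_tendsto htend ?_
    filter_upwards [eventually_ge_atTop 1] with k hk
    have hb := (hblocks k).2
    have hbr : ((cnt u c 0 (k * m) : ℝ) ≤ (k : ℝ) * ((r : ℝ) + 1)) := by
      exact_mod_cast hb
    rw [div_le_div_iff₀ (by positivity) (by positivity)]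
    push_cast
    nlinarith [hbr]
  have hmpos : (0 : ℝ) < m := by exact_mod_cast hm
  rw [abs_le]
  rw [div_le_iff₀ hmpos] at hlb
  rw [le_div_iff₀ hmpos] at hub
  constructor <;> nlinarith

/-- The frequency of `false` is `1 - f` if that of `true` is `f`. -/
lemma hasFreq_false {u : ℕ → Bool} {f : ℝ} (hfreq : HasFreq u true f) :
    HasFreq u false (1 - f) := by
  unfold HasFreq at *
  have h : Tendsto (fun n : ℕ => 1 - (cnt u true 0 n : ℝ) / n) atTop (𝓝 (1 - f)) :=
    tendsto_const_nhds.sub hfreq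
  refine h.congr' ?_
  filter_upwards [eventually_ge_atTop 1] with n hn
  have hsum := cnt_true_add_false u 0 n
  have hle := cnt_le u true 0 n
  have hnpos : (0 : ℝ) < n := by exact_mod_cast hn
  have : (cnt u false 0 n : ℝ) = n - cnt u true 0 n := by
    have : (cnt u true 0 n : ℝ) + (cnt u false 0 n : ℝ) = n := by exact_mod_cast hsum
    linarith
  rw [this]
  field_simp

section HeavyLight

variable {u : ℕ → Bool} {c : Bool} {f : ℝ}

/-- No coexistence of a "heavy" window (count `f*n + 1`) and a "light" window
(count `f*g - 1`). Euclidean descent. -/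
lemma no_heavy_light (hbal : IsBalanced 1 u)
    (hdisc : ∀ i m, |(cnt u c i m : ℝ) - f * m| ≤ 1) :
    ∀ N n g h l : ℕ, n + g ≤ N → 1 ≤ n → 1 ≤ g →
      (cnt u c h n : ℝ) = f * n + 1 → (cnt u c l g : ℝ) = f * g - 1 → False := by
  intro N
  induction N using Nat.strong_induction_on with
  | _ N ih =>
    intro n g h l hN hn hg hheavy hlight
    rcases lt_trichotomy n g with hlt | heq | hgt
    · -- n < g : produce a light window of length g - n at l + n
      have h1 : (f * n : ℝ) ≤ (cnt u c l n : ℝ) := by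
        have := bal' hbal c h l n
        have : (cnt u c h n : ℝ) ≤ (cnt u c l n : ℝ) + 1 := by exact_mod_cast this
        linarith
      have hsplit : cnt u c l g = cnt u c l n + cnt u c (l + n) (g - n) := by
        rw [← cnt_add]; congr 1; omega
      have hup : (cnt u c (l + n) (g - n) : ℝ) ≤ f * (g - n : ℕ) - 1 := by
        have hcast : ((g - n : ℕ) : ℝ) = (g : ℝ) - n := by
          push_cast [Nat.cast_sub hlt.le]; ring
        have : (cnt u c l n : ℝ) + (cnt u c (l + n) (g - n) : ℝ) = f * g - 1 := by
          rw [← hlight]; exact_mod_cast hsplit.symm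
        rw [hcast]; nlinarith
      have hdn := hdisc (l + n) (g - n)
      rw [abs_le] at hdn
      have hnew : (cnt u c (l + n) (g - n) : ℝ) = f * (g - n : ℕ) - 1 :=
        le_antisymm hup (by linarith [hdn.1])
      exact ih (N - n) (by omega) n (g - n) h (l + n) (by omega) hn (by omega) hheavy hnew
    · -- n = g : direct balance violation
      subst heq
      have hb := hbal h l n c
      have : (cnt u c h n : ℝ) - (cnt u c l n : ℝ) = 2 := by rw [hheavy, hlight]; ring
      have h2 : (cnt u c h n : ℤ) - (cnt u c l n : ℤ) = 2 := by exact_mod_cast this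
      omega
    · -- n > g : produce a heavy window of length n - g at h + g
      have h1 : (cnt u c h g : ℝ) ≤ f * g := by
        have := bal' hbal c h l g
        have : (cnt u c h g : ℝ) ≤ (cnt u c l g : ℝ) + 1 := by exact_mod_cast this
        linarith
      have hsplit : cnt u c h n = cnt u c h g + cnt u c (h + g) (n - g) := by
        rw [← cnt_add]; congr 1; omega
      have hlow : f * (n - g : ℕ) + 1 ≤ (cnt u c (h + g) (n - g) : ℝ) := by
        have hcast : ((n - g : ℕ) : ℝ) = (n : ℝ) - g := by
          push_cast [Nat.cast_sub hgt.le]; ring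
        have : (cnt u c h g : ℝ) + (cnt u c (h + g) (n - g) : ℝ) = f * n + 1 := by
          rw [← hheavy]; exact_mod_cast hsplit.symm
        rw [hcast]; nlinarith
      have hdn := hdisc (h + g) (n - g)
      rw [abs_le] at hdn
      have hnew : (cnt u c (h + g) (n - g) : ℝ) = f * (n - g : ℕ) + 1 :=
        le_antisymm (by linarith [hdn.2]) hlow
      exact ih (N - g) (by omega) (n - g) g (h + g) l (by omega) (by omega) hg hnew hlight

/-- Two heavy windows of the same length at distance `≥ n` are impossible. -/
lemma heavy_unique_far (hbal : IsBalanced 1 u)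
    (hdisc : ∀ i m, |(cnt u c i m : ℝ) - f * m| ≤ 1)
    {h d n : ℕ} (hn : 1 ≤ n) (hd : n ≤ d)
    (h1 : (cnt u c h n : ℝ) = f * n + 1)
    (h2 : (cnt u c (h + d) n : ℝ) = f * n + 1) : False := by
  rcases eq_or_lt_of_le hd with rfl | hlt
  · -- d = n : window of length 2n has count 2fn+2
    have hsplit : cnt u c h (n + n) = cnt u c h n + cnt u c (h + n) n := cnt_add u c h n n
    have hdd := hdisc h (n + n)
    rw [abs_le] at hdd
    have : (cnt u c h (n + n) : ℝ) = f * n + 1 + (f * n + 1) := by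
      rw [hsplit]; push_cast; rw [h1, h2]
    push_cast at hdd this
    nlinarith [hdd.2]
  · -- d > n : the middle window of length g := d - n is light
    set g := d - n with hgdef
    have hg : 1 ≤ g := by omega
    have hsplit : cnt u c h (n + g + n) = cnt u c h n + cnt u c (h + n) g + cnt u c (h + d) n := by
      rw [cnt_add, cnt_add]
      congr 2
      omega
    have hdd := hdisc h (n + g + n)
    rw [abs_le] at hdd
    have hXup : (cnt u c (h + n) g : ℝ) ≤ f * g - 1 := by
      have hc : (cnt u c h (n + g + n) : ℝ) =
          (f * n + 1) + (cnt u c (h + n) g : ℝ) + (f * n + 1) := by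
        rw [hsplit]; push_cast; rw [h1, h2]
      have hcast : ((n + g + n : ℕ) : ℝ) = (n : ℝ) + g + n := by push_cast; ring
      rw [hcast] at hdd
      nlinarith [hdd.2]
    have hdg := hdisc (h + n) g
    rw [abs_le] at hdg
    have hlight : (cnt u c (h + n) g : ℝ) = f * g - 1 := le_antisymm hXup (by linarith [hdg.1])
    exact no_heavy_light hbal hdisc (n + g) n g h (h + n) le_rfl hn hg h1 hlight

/-- core : heavy pattern cannot reoccur strictly later -/
lemma heavy_pattern_unique_core (hbal : IsBalanced 1 u)
    (hdisc : ∀ i m, |(cnt u c i m : ℝ) - f * m| ≤ 1)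
    {n i j : ℕ} (hn : 1 ≤ n) (hij : i < j)
    (hpat : ∀ t < n, u (i + t) = u (j + t))
    (hheavy : (cnt u c i n : ℝ) = f * n + 1) : False := by
  set d := j - i with hddef
  have hd1 : 1 ≤ d := by omega
  have hj : j = i + d := by omega
  have hheavy' : (cnt u c j n : ℝ) = f * n + 1 := by
    rw [cnt_congr c (fun t ht => (hpat t ht).symm)]; exact hheavy
  rcases le_or_gt n d with hnd | hdn
  · exact heavy_unique_far hbal hdisc hn hnd hheavy (by rw [← hj]; exact hheavy')
  · -- overlapping case : d < n
    have hper : ∀ x < n, u (i + x) = u (i + x + d) := by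
      intro x hx
      have := hpat x hx
      rw [this, hj]; congr 1; omega
    set q := n / d with hqdef
    set s := n % d with hsdef
    have hnqs : n = q * d + s := by rw [Nat.mul_comm]; exact (Nat.div_add_mod n d).symm
    have hq1 : 1 ≤ q := by
      rw [hqdef]; exact Nat.one_le_div_iff (by omega) |>.mpr hdn.le
    have hs_lt : s < d := Nat.mod_lt _ (by omega)
    -- all q aligned d-blocks inside [i, i+n) have count cnt u c i d
    have hblocks : ∀ t, t < q → cnt u c (i + t * d) d = cnt u c i d := by
      intro t
      induction t with
      | zero => intro _; simp
      | succ t iht =>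
        intro ht
        have hprev := iht (by omega)
        rw [← hprev]
        apply cnt_congr
        intro r hr
        have hmul : (t + 1) * d = t * d + d := by ring
        have hmul2 : (t + 1) * d ≤ q * d := Nat.mul_le_mul_right d (by omega)
        have hlt : t * d + r < n := by omega
        have hp := hper (t * d + r) hlt
        have e1 : i + (t + 1) * d + r = i + (t * d + r) + d := by omega
        have e2 : i + t * d + r = i + (t * d + r) := by omega
        rw [e1, e2, ← hp]
    have hqd : ∀ Q, Q ≤ q → cnt u c i (Q * d) = Q * cnt u c i d := by
      intro Q
      induction Q with
      | zero => intro _; simp [cnt_zero]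
      | succ Q ihQ =>
        intro hQ
        have hsp : cnt u c i ((Q + 1) * d) = cnt u c i (Q * d) + cnt u c (i + Q * d) d := by
          rw [← cnt_add]; congr 1; ring
        rw [hsp, ihQ (by omega), hblocks Q (by omega)]
        ring
    -- bound cnt u c i d
    have htot : cnt u c i (d + n) = cnt u c i d + cnt u c j n := by
      rw [cnt_add, hj]
    have hdd := hdisc i (d + n)
    rw [abs_le] at hdd
    have hc0 : (cnt u c i d : ℝ) ≤ f * d := by
      have hv : (cnt u c i (d + n) : ℝ) = (cnt u c i d : ℝ) + (f * n + 1) := by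
        rw [htot]; push_cast; rw [hheavy']
      push_cast at hdd
      nlinarith [hdd.2]
    -- the remainder window is heavy
    have hrem : cnt u c i n = q * cnt u c i d + cnt u c (i + q * d) s := by
      conv_lhs => rw [hnqs]
      rw [cnt_add, hqd q le_rfl]
    have hds := hdisc (i + q * d) s
    rw [abs_le] at hds
    have hcast : (n : ℝ) = (q : ℝ) * d + s := by exact_mod_cast hnqs
    have hXval : (cnt u c (i + q * d) s : ℝ) = f * n + 1 - (q : ℝ) * cnt u c i d := by
      have h' := congrArg (Nat.cast : ℕ → ℝ) hrem
      push_cast at h'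
      rw [hheavy] at h'
      linarith
    have hsheavy : (cnt u c (i + q * d) s : ℝ) = f * s + 1 := by
      have hlow : f * s + 1 ≤ (cnt u c (i + q * d) s : ℝ) := by
        rw [hXval, hcast]
        have hq0 : (0 : ℝ) < (q : ℝ) := by exact_mod_cast hq1
        nlinarith [hc0]
      exact le_antisymm (by linarith [hds.2]) hlow
    rcases Nat.eq_zero_or_pos s with hs0 | hs1
    · rw [hs0] at hsheavy
      simp [cnt_zero] at hsheavy
    · -- a second heavy s-window at i + q * d + d
      have hsecond : cnt u c (i + q * d + d) s = cnt u c (i + q * d) s := by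
        apply cnt_congr
        intro r hr
        have hx : q * d + r < n := by omega
        have hp := hper (q * d + r) hx
        have e1 : i + q * d + d + r = i + (q * d + r) + d := by omega
        have e2 : i + q * d + r = i + (q * d + r) := by omega
        rw [e1, e2, ← hp]
      exact heavy_unique_far hbal hdisc hs1 hs_lt.le hsheavy
        (by rw [hsecond]; exact hsheavy)

/-- A heavy pattern occurs at a unique position. -/
lemma heavy_pattern_unique (hbal : IsBalanced 1 u)
    (hdisc : ∀ i m, |(cnt u c i m : ℝ) - f * m| ≤ 1)
    {n i j : ℕ} (hn : 1 ≤ n)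
    (hpat : ∀ t < n, u (i + t) = u (j + t))
    (hheavy : (cnt u c i n : ℝ) = f * n + 1) : i = j := by
  rcases lt_trichotomy i j with h | h | h
  · exact absurd (heavy_pattern_unique_core hbal hdisc hn h hpat hheavy) not_false
  · exact h
  · exfalso
    have hheavy' : (cnt u c j n : ℝ) = f * n + 1 := by
      rw [cnt_congr c (fun t ht => (hpat t ht).symm)]; exact hheavy
    exact heavy_pattern_unique_core hbal hdisc hn h (fun t ht => (hpat t ht).symm) hheavy'

/-- If a window count exceeds `⌈f·n⌉₊` then it is heavy. -/
lemma heavy_char (hdisc : ∀ i m, |(cnt u c i m : ℝ) - f * m| ≤ 1)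
    {i n : ℕ} (h : Nat.ceil (f * n) < cnt u c i n) :
    (cnt u c i n : ℝ) = f * n + 1 := by
  have h1 := hdisc i n
  rw [abs_le] at h1
  have h2 : (Nat.ceil (f * n) : ℝ) + 1 ≤ (cnt u c i n : ℝ) := by exact_mod_cast h
  have h3 : (f * n : ℝ) ≤ Nat.ceil (f * n) := Nat.le_ceil _
  linarith [h1.2]

end HeavyLight

/-! ### Factor sets and complexity -/

/-- The set of factors of length `n`. -/
def Fac {C : Type*} (u : ℕ → C) (n : ℕ) : Set (Fin n → C) :=
  {w : Fin n → C | ∃ i : ℕ, ∀ t : Fin n, w t = u (i + t)}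

lemma factor_mem {C : Type*} (u : ℕ → C) (n i : ℕ) :
    (fun t : Fin n => u (i + t)) ∈ Fac u n := ⟨i, fun _ => rfl⟩

lemma fac_zero_ncard {C : Type*} (u : ℕ → C) : (Fac u 0).ncard = 1 := by
  have h : Fac u 0 = Set.univ := Set.eq_univ_of_forall (fun w => ⟨0, fun t => t.elim0⟩)
  rw [h, Set.ncard_univ]
  exact Nat.card_unique

/-- A 1-balanced binary sequence has factor complexity at most `n + 1`. -/
lemma balanced_fac_ncard {u : ℕ → Bool} (hbal : IsBalanced 1 u) (n : ℕ) :
    (Fac u n).ncard ≤ n + 1 := by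
  induction n with
  | zero =>
    rw [fac_zero_ncard]
  | succ n ih =>
    classical
    set RS : Set (Fin n → Bool) :=
      {x | Fin.snoc x true ∈ Fac u (n + 1) ∧ Fin.snoc x false ∈ Fac u (n + 1)} with hRS
    have hsnoc : ∀ w : Fin (n + 1) → Bool, w = Fin.snoc (Fin.init w) (w (Fin.last n)) :=
      fun w => (Fin.snoc_init_self w).symm
    -- at most one right-special factor
    have hRSsub : RS.Subsingleton := by
      intro p hp q hq
      by_contra hne
      have hDne : (Finset.univ.filter (fun t : Fin n => p t ≠ q t)).Nonempty := by
        by_contra hD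
        apply hne
        funext t
        by_contra ht
        exact hD ⟨t, Finset.mem_filter.mpr ⟨Finset.mem_univ t, ht⟩⟩
      set d := (Finset.univ.filter (fun t : Fin n => p t ≠ q t)).max' hDne with hd
      have hdmem : p d ≠ q d := by
        have := (Finset.univ.filter (fun t : Fin n => p t ≠ q t)).max'_mem hDne
        exact (Finset.mem_filter.mp this).2
      have hagree : ∀ t : Fin n, (d : ℕ) < (t : ℕ) → p t = q t := by
        intro t ht
        by_contra hpq
        have hmem : t ∈ Finset.univ.filter (fun t : Fin n => p t ≠ q t) :=
          Finset.mem_filter.mpr ⟨Finset.mem_univ t, hpq⟩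
        have := Finset.le_max' _ t hmem
        have : (t : ℕ) ≤ (d : ℕ) := this
        omega
      have key : ∀ x y : Fin n → Bool,
          Fin.snoc x true ∈ Fac u (n + 1) → Fin.snoc y false ∈ Fac u (n + 1) →
          x d = true → y d = false → (∀ t : Fin n, (d : ℕ) < (t : ℕ) → x t = y t) → False := by
        intro x y hxt hyf hxd hyd hagr
        obtain ⟨i, hi⟩ := hxt
        obtain ⟨j, hj⟩ := hyf
        have hix : ∀ t : Fin n, x t = u (i + (t : ℕ)) := by
          intro t
          have := hi t.castSucc
          rwa [Fin.snoc_castSucc] at this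
        have hilast : u (i + n) = true := by
          have := hi (Fin.last n)
          rw [Fin.snoc_last] at this
          exact this.symm
        have hjy : ∀ t : Fin n, y t = u (j + (t : ℕ)) := by
          intro t
          have := hj t.castSucc
          rwa [Fin.snoc_castSucc] at this
        have hjlast : u (j + n) = false := by
          have := hj (Fin.last n)
          rw [Fin.snoc_last] at this
          exact this.symm
        have hdn : (d : ℕ) < n := d.isLt
        set L := n + 1 - (d : ℕ) with hL
        have hLsplit : L = 1 + (n - (d : ℕ) - 1) + 1 := by omega
        have hmid : cnt u true (i + (d : ℕ) + 1) (n - (d : ℕ) - 1)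
            = cnt u true (j + (d : ℕ) + 1) (n - (d : ℕ) - 1) := by
          apply cnt_congr
          intro r hr
          have hrn : (d : ℕ) + 1 + r < n := by omega
          set t : Fin n := ⟨(d : ℕ) + 1 + r, hrn⟩ with htd
          have h1 : i + (d : ℕ) + 1 + r = i + (t : ℕ) := by simp [htd]; omega
          have h2 : j + (d : ℕ) + 1 + r = j + (t : ℕ) := by simp [htd]; omega
          rw [h1, h2, ← hix t, ← hjy t, hagr t (by simp [htd]; omega)]
        have hcnti : cnt u true (i + (d : ℕ)) L
            = 1 + cnt u true (i + (d : ℕ) + 1) (n - (d : ℕ) - 1) + 1 := by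
          rw [hLsplit, cnt_add, cnt_add, cnt_one, cnt_one]
          have e0 : u (i + (d : ℕ)) = true := by rw [← hix d, hxd]
          have e1 : i + (d : ℕ) + (1 + (n - (d : ℕ) - 1)) = i + n := by omega
          rw [e0, e1, hilast]
          simp
        have hcntj : cnt u true (j + (d : ℕ)) L
            = cnt u true (j + (d : ℕ) + 1) (n - (d : ℕ) - 1) := by
          rw [hLsplit, cnt_add, cnt_add, cnt_one, cnt_one]
          have e0 : u (j + (d : ℕ)) = false := by rw [← hjy d, hyd]
          have e1 : j + (d : ℕ) + (1 + (n - (d : ℕ) - 1)) = j + n := by omega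
          rw [e0, e1, hjlast]
          simp
        have hb := hbal (i + (d : ℕ)) (j + (d : ℕ)) L true
        rw [hcnti, hcntj, hmid] at hb
        omega
      cases hpd : p d <;> cases hqd : q d
      · exact hdmem (hpd.trans hqd.symm)
      · exact key q p hq.1 hp.2 hqd hpd (fun t ht => (hagree t ht).symm)
      · exact key p q hp.1 hq.2 hpd hqd hagree
      · exact hdmem (hpd.trans hqd.symm)
    -- split the factors of length n+1 into special and non-special ones
    set S1 : Set (Fin (n + 1) → Bool) :=
      {w ∈ Fac u (n + 1) | Fin.init w ∈ RS ∧ w (Fin.last n) = true} with hS1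
    set S2 : Set (Fin (n + 1) → Bool) :=
      {w ∈ Fac u (n + 1) | ¬ (Fin.init w ∈ RS ∧ w (Fin.last n) = true)} with hS2
    have hunion : Fac u (n + 1) = S1 ∪ S2 := by
      ext w
      constructor
      · intro hw
        by_cases hc : Fin.init w ∈ RS ∧ w (Fin.last n) = true
        · exact Or.inl ⟨hw, hc⟩
        · exact Or.inr ⟨hw, hc⟩
      · rintro (⟨hw, _⟩ | ⟨hw, _⟩) <;> exact hw
    have hinit : ∀ w ∈ Fac u (n + 1), Fin.init w ∈ Fac u n := by
      rintro w ⟨i, hi⟩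
      refine ⟨i, fun t => ?_⟩
      have := hi t.castSucc
      rw [Fin.init]
      convert this using 2
      rfl
    have hS1sub : S1.Subsingleton := by
      rintro w ⟨hw, hw1, hw2⟩ w' ⟨hw', hw1', hw2'⟩
      have hxy : Fin.init w = Fin.init w' := hRSsub hw1 hw1'
      rw [hsnoc w, hsnoc w', hxy, hw2, hw2']
    have hS2inj : Set.InjOn Fin.init S2 := by
      rintro w ⟨hw, hwc⟩ w' ⟨hw', hwc'⟩ hxy
      by_cases hlast : w (Fin.last n) = w' (Fin.last n)
      · rw [hsnoc w, hsnoc w', hxy, hlast]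
      · exfalso
        have hrs : Fin.init w ∈ RS := by
          cases hv : w (Fin.last n) <;> cases hv' : w' (Fin.last n)
          · exact absurd (hv.trans hv'.symm) hlast
          · refine ⟨?_, ?_⟩
            · rw [hxy, ← hv', ← hsnoc w']; exact hw'
            · rw [← hv, ← hsnoc w]; exact hw
          · refine ⟨?_, ?_⟩
            · rw [← hv, ← hsnoc w]; exact hw
            · rw [hxy, ← hv', ← hsnoc w']; exact hw'
          · exact absurd (hv.trans hv'.symm) hlast
        cases hv : w (Fin.last n)
        · have hv' : w' (Fin.last n) = true := by
            cases hv2 : w' (Fin.last n)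
            · exact absurd (hv.trans hv2.symm) hlast
            · rfl
          exact hwc' ⟨hxy ▸ hrs, hv'⟩
        · exact hwc ⟨hrs, hv⟩
    have hS1card : S1.ncard ≤ 1 :=
      (Set.Subsingleton.eq_empty_or_singleton hS1sub).elim
        (fun h => by simp [h]) (fun ⟨a, h⟩ => by simp [h])
    have hS2card : S2.ncard ≤ n + 1 := by
      have hmaps : ∀ w ∈ S2, Fin.init w ∈ Fac u n := fun w hw => hinit w hw.1
      have := Set.ncard_le_ncard_of_injOn Fin.init hmaps hS2inj (Set.toFinite (Fac u n))
      omega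
    calc (Fac u (n + 1)).ncard = (S1 ∪ S2).ncard := by rw [hunion]
      _ ≤ S1.ncard + S2.ncard := Set.ncard_union_le _ _
      _ ≤ n + 1 + 1 := by omega

lemma complexity_eq_fac {C : Type*} (w : ℕ → C) (m : ℕ) :
    complexity w m = (Fac w m).ncard := rfl

lemma ncard_sprod {X Y : Type*} (s : Set X) (t : Set Y) :
    (s ×ˢ t).ncard = s.ncard * t.ncard := by
  rw [← Nat.card_coe_set_eq, ← Nat.card_coe_set_eq, ← Nat.card_coe_set_eq,
    ← Nat.card_prod]
  exact Nat.card_congr (Equiv.Set.prod s t)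

lemma fac_finite_of_one {C : Type*} (w : ℕ → C) (h1 : (Fac w 1).Finite) :
    ∀ m, (Fac w m).Finite := by
  intro m
  induction m with
  | zero =>
    have : Subsingleton (Fin 0 → C) := ⟨fun a b => funext fun t => t.elim0⟩
    exact Set.subsingleton_of_subsingleton.finite
  | succ m ihm =>
    set Θ : (Fin (m + 1) → C) → (Fin m → C) × (Fin 1 → C) :=
      fun x => (Fin.init x, fun _ => x (Fin.last m)) with hΘ
    have hinjΘ : Function.Injective Θ := by
      intro x y hxy
      simp only [hΘ, Prod.mk.injEq] at hxy
      obtain ⟨h1', h2'⟩ := hxy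
      have hlast : x (Fin.last m) = y (Fin.last m) := congrFun h2' 0
      rw [← Fin.snoc_init_self x, ← Fin.snoc_init_self y, h1', hlast]
    have hsub : Fac w (m + 1) ⊆ Θ ⁻¹' ((Fac w m) ×ˢ (Fac w 1)) := by
      rintro x ⟨i, hi⟩
      constructor
      · refine ⟨i, fun t => ?_⟩
        have hinit_eq : (Θ x).1 t = x t.castSucc := rfl
        rw [hinit_eq, hi t.castSucc, Fin.coe_castSucc]
      · refine ⟨i + m, fun t => ?_⟩
        have := hi (Fin.last m)
        simp only [hΘ]
        rw [this]
        congr 1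
        have : (t : ℕ) = 0 := by omega
        rw [this]
        simp [Fin.last]
    exact ((ihm.prod h1).preimage (hinjΘ.injOn)).subset hsub

/-- Every value `k` is attained as the count before some position of letter `c`. -/
lemma exists_letter_at {u : ℕ → Bool} {c : Bool} {f : ℝ}
    (hdisc : ∀ i m, |(cnt u c i m : ℝ) - f * m| ≤ 1) (hf : 0 < f) (k : ℕ) :
    ∃ i, u i = c ∧ cnt u c 0 i = k := by
  classical
  obtain ⟨M, hM⟩ := exists_nat_gt ((k + 2) / f)
  have hMcnt : k + 1 ≤ cnt u c 0 M := by
    have h1 := (abs_le.mp (hdisc 0 M)).1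
    rw [div_lt_iff₀ hf] at hM
    have : (k + 1 : ℝ) < (cnt u c 0 M : ℝ) := by nlinarith
    exact_mod_cast this.le
  have hex : ∃ i, k + 1 ≤ cnt u c 0 (i + 1) := by
    refine ⟨M - 1, ?_⟩
    have hM1 : 1 ≤ M := le_trans (by omega) (le_trans hMcnt (cnt_le u c 0 M))
    have hMM : M - 1 + 1 = M := by omega
    rw [hMM]
    exact hMcnt
  set i := Nat.find hex with hi
  have hspec : k + 1 ≤ cnt u c 0 (i + 1) := Nat.find_spec hex
  have hprev : cnt u c 0 i ≤ k := by
    rcases Nat.eq_zero_or_pos i with h0 | h0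
    · rw [h0, cnt_zero]; omega
    · have hmin := Nat.find_min hex (show i - 1 < i by omega)
      have hii : i - 1 + 1 = i := by omega
      rw [hii] at hmin
      omega
  have hstep : cnt u c 0 (i + 1) = cnt u c 0 i + (if u i = c then 1 else 0) := by
    have := cnt_succ u c 0 i
    simpa using this
  by_cases hic : u i = c
  · refine ⟨i, hic, ?_⟩
    rw [if_pos hic] at hstep
    have := cnt_le u c 0 i
    have hstep2 : cnt u c 0 (i + 1) ≤ cnt u c 0 i + 1 := by omega
    omega
  · exfalso
    rw [if_neg hic] at hstep
    omega

lemma fac_colour_infinite_left {A B : Type*} [DecidableEq A] [DecidableEq B]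
    {u : ℕ → Bool} (va : ℕ → A) (vb : ℕ → B) {n : ℕ} (hn : 0 < n)
    (hocc : ∀ k, ∃ i, u i = true ∧ cnt u true 0 i = k)
    (hinf : (Fac va 1).Infinite) : (Fac (colour u va vb) n).Infinite := by
  classical
  by_contra hfin
  rw [Set.not_infinite] at hfin
  apply hinf
  set φ : (Fin n → A ⊕ B) → Option A := fun w => (w ⟨0, hn⟩).getLeft? with hφ
  have himg : ((fun w : Fin 1 → A => some (w 0)) '' (Fac va 1)).Finite := by
    apply Set.Finite.subset (hfin.image φ)
    rintro _ ⟨w1, ⟨kk, hkk⟩, rfl⟩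
    obtain ⟨i, hui, hcnt⟩ := hocc kk
    refine ⟨fun t => colour u va vb (i + t), factor_mem _ n i, ?_⟩
    simp only [hφ]
    have hw1 : w1 0 = va kk := by
      have := hkk 0
      simpa using this
    simp [colour, hui, hcnt, hw1]
  have hinj : Set.InjOn (fun w : Fin 1 → A => some (w 0)) (Fac va 1) := by
    intro w hw w' hw' h
    simp only [Option.some.injEq] at h
    funext t
    have : t = 0 := Subsingleton.elim t 0
    rw [this, h]
  exact Set.Finite.of_finite_image himg hinj

lemma fac_colour_infinite_right {A B : Type*} [DecidableEq A] [DecidableEq B]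
    {u : ℕ → Bool} (va : ℕ → A) (vb : ℕ → B) {n : ℕ} (hn : 0 < n)
    (hocc : ∀ k, ∃ i, u i = false ∧ cnt u false 0 i = k)
    (hinf : (Fac vb 1).Infinite) : (Fac (colour u va vb) n).Infinite := by
  classical
  by_contra hfin
  rw [Set.not_infinite] at hfin
  apply hinf
  set φ : (Fin n → A ⊕ B) → Option B := fun w => (w ⟨0, hn⟩).getRight? with hφ
  have himg : ((fun w : Fin 1 → B => some (w 0)) '' (Fac vb 1)).Finite := by
    apply Set.Finite.subset (hfin.image φ)
    rintro _ ⟨w1, ⟨kk, hkk⟩, rfl⟩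
    obtain ⟨i, hui, hcnt⟩ := hocc kk
    refine ⟨fun t => colour u va vb (i + t), factor_mem _ n i, ?_⟩
    simp only [hφ]
    have hw1 : w1 0 = vb kk := by
      have := hkk 0
      simpa using this
    simp [colour, hui, hcnt, hw1]
  have hinj : Set.InjOn (fun w : Fin 1 → B => some (w 0)) (Fac vb 1) := by
    intro w hw w' hw' h
    simp only [Option.some.injEq] at h
    funext t
    have : t = 0 := Subsingleton.elim t 0
    rw [this, h]
  exact Set.Finite.of_finite_image himg hinj

end ColourAux

open ColourAux

/-- If `u` is a `1`-balanced binary sequence in which the letter `a` (`true`) has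
frequency `α ∈ (0,1)`, then the factor complexity of `v = colour(u, va, vb)`
satisfies `𝒞_v(n) ≤ (n+1)·𝒞_va(⌈αn⌉)·𝒞_vb(⌈(1-α)n⌉)`. -/
theorem colour_complexity_bound {A B : Type*} [DecidableEq A] [DecidableEq B]
    (u : ℕ → Bool) (va : ℕ → A) (vb : ℕ → B)
    (α : ℝ) (hα : α ∈ Set.Ioo (0 : ℝ) 1)
    (hbal : IsBalanced 1 u) (hfreq : HasFreq u true α) (n : ℕ) :
    complexity (colour u va vb) n ≤
      (n + 1) * complexity va ⌈α * n⌉₊ * complexity vb ⌈(1 - α) * n⌉₊ := by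
  classical
  obtain ⟨hα0, hα1⟩ := hα
  have hdiscT : ∀ i m, |(cnt u true i m : ℝ) - α * m| ≤ 1 := discrepancy hbal hfreq
  have hfreqF : HasFreq u false (1 - α) := hasFreq_false hfreq
  have hdiscF : ∀ i m, |(cnt u false i m : ℝ) - (1 - α) * m| ≤ 1 := discrepancy hbal hfreqF
  rcases Nat.eq_zero_or_pos n with rfl | hn
  · -- n = 0
    have hc : (α : ℝ) * (0 : ℕ) = 0 := by simp
    have hc' : (1 - α) * ((0 : ℕ) : ℝ) = 0 := by simp
    rw [complexity_eq_fac, complexity_eq_fac, complexity_eq_fac, hc, hc', Nat.ceil_zero,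
      fac_zero_ncard, fac_zero_ncard, fac_zero_ncard]
  · -- n ≥ 1
    set ma := ⌈α * (n : ℝ)⌉₊ with hma
    set mb := ⌈(1 - α) * (n : ℝ)⌉₊ with hmb
    set v := colour u va vb with hv
    rw [complexity_eq_fac, complexity_eq_fac, complexity_eq_fac]
    by_cases hA1 : (Fac va 1).Finite
    case neg =>
      have hinf : (Fac v n).Infinite :=
        fac_colour_infinite_left va vb hn
          (fun k => exists_letter_at hdiscT hα0 k) hA1
      rw [hinf.ncard]
      exact Nat.zero_le _
    by_cases hB1 : (Fac vb 1).Finite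
    case neg =>
      have hinf : (Fac v n).Infinite :=
        fac_colour_infinite_right va vb hn
          (fun k => exists_letter_at hdiscF (by linarith) k) hB1
      rw [hinf.ncard]
      exact Nat.zero_le _
    -- both letter alphabets finite
    have hA : (Fac va ma).Finite := fac_finite_of_one va hA1 ma
    have hB : (Fac vb mb).Finite := fac_finite_of_one vb hB1 mb
    -- choice of occurrence indices
    obtain ⟨idx, hidx⟩ : ∃ idx : (Fin n → A ⊕ B) → ℕ,
        ∀ w ∈ Fac v n, ∀ t : Fin n, w t = v (idx w + t) :=
      ⟨fun w => if h : w ∈ Fac v n then h.choose else 0,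
        fun w hw t => by
          show w t = v ((if h : w ∈ Fac v n then h.choose else 0) + (t : ℕ))
          rw [dif_pos hw]
          exact hw.choose_spec t⟩
    set Φ : (Fin n → A ⊕ B) → (Fin n → Bool) × (Fin ma → A) × (Fin mb → B) := fun w =>
      (fun t => (w t).isLeft,
       fun s => va (cnt u true 0 (idx w) + s),
       fun s => vb (cnt u false 0 (idx w) + s)) with hΦ
    have hpatt : ∀ w ∈ Fac v n, ∀ t : Fin n, (w t).isLeft = u (idx w + t) := by
      intro w hw t
      rw [hidx w hw t]
      cases hu : u (idx w + (t : ℕ)) <;> simp [hv, colour, hu]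
    have hval_true : ∀ w ∈ Fac v n, ∀ t : Fin n, u (idx w + t) = true →
        w t = Sum.inl (va (cnt u true 0 (idx w) + cnt u true (idx w) t)) := by
      intro w hw t hu
      rw [hidx w hw t]
      have hsplit : cnt u true 0 (idx w + (t : ℕ))
          = cnt u true 0 (idx w) + cnt u true (idx w) (t : ℕ) := by
        simpa using cnt_add u true 0 (idx w) (t : ℕ)
      simp [hv, colour, hu, hsplit]
    have hval_false : ∀ w ∈ Fac v n, ∀ t : Fin n, u (idx w + t) = false →
        w t = Sum.inr (vb (cnt u false 0 (idx w) + cnt u false (idx w) t)) := by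
      intro w hw t hu
      rw [hidx w hw t]
      have hsplit : cnt u false 0 (idx w + (t : ℕ))
          = cnt u false 0 (idx w) + cnt u false (idx w) (t : ℕ) := by
        simpa using cnt_add u false 0 (idx w) (t : ℕ)
      simp [hv, colour, hu, hsplit]
    have hmapsto : ∀ w ∈ Fac v n, Φ w ∈ (Fac u n) ×ˢ ((Fac va ma) ×ˢ (Fac vb mb)) := by
      intro w hw
      refine ⟨⟨idx w, fun t => hpatt w hw t⟩, ?_, ?_⟩
      · exact ⟨cnt u true 0 (idx w), fun s => rfl⟩
      · exact ⟨cnt u false 0 (idx w), fun s => rfl⟩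
    have hinj : Set.InjOn Φ (Fac v n) := by
      intro w hw w' hw' hEq
      simp only [hΦ, Prod.mk.injEq] at hEq
      obtain ⟨hp, ha, hb⟩ := hEq
      have hpatne : ∀ t < n, u (idx w + t) = u (idx w' + t) := by
        intro t ht
        have h1 := hpatt w hw ⟨t, ht⟩
        have h2 := hpatt w' hw' ⟨t, ht⟩
        have h3 := congrFun hp ⟨t, ht⟩
        rw [← h1, ← h2, h3]
      by_cases hgood : cnt u true (idx w) n ≤ ma ∧ cnt u false (idx w) n ≤ mb
      · -- good pattern : reconstruct both words
        funext t
        have hcntT : cnt u true (idx w) (t : ℕ) = cnt u true (idx w') (t : ℕ) :=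
          cnt_congr true (fun s hs => hpatne s (by omega))
        have hcntF : cnt u false (idx w) (t : ℕ) = cnt u false (idx w') (t : ℕ) :=
          cnt_congr false (fun s hs => hpatne s (by omega))
        cases hu : u (idx w + (t : ℕ))
        · -- letter false
          have h1 := hval_false w hw t hu
          have h2 := hval_false w' hw' t (by rw [← hpatne (t : ℕ) t.isLt]; exact hu)
          have hlt : cnt u false (idx w) (t : ℕ) < mb := by
            have hstep : cnt u false (idx w) ((t : ℕ) + 1)
                = cnt u false (idx w) (t : ℕ) + 1 := by
              rw [cnt_succ, if_pos hu]
            have hmono := cnt_mono_len u false (idx w) (show (t : ℕ) + 1 ≤ n by omega)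
            omega
          rw [h1, h2, ← hcntF]
          have := congrFun hb ⟨cnt u false (idx w) (t : ℕ), hlt⟩
          simp only at this
          rw [this]
        · -- letter true
          have h1 := hval_true w hw t hu
          have h2 := hval_true w' hw' t (by rw [← hpatne (t : ℕ) t.isLt]; exact hu)
          have hlt : cnt u true (idx w) (t : ℕ) < ma := by
            have hstep : cnt u true (idx w) ((t : ℕ) + 1)
                = cnt u true (idx w) (t : ℕ) + 1 := by
              rw [cnt_succ, if_pos hu]
            have hmono := cnt_mono_len u true (idx w) (show (t : ℕ) + 1 ≤ n by omega)
            omega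
          rw [h1, h2, ← hcntT]
          have := congrFun ha ⟨cnt u true (idx w) (t : ℕ), hlt⟩
          simp only at this
          rw [this]
      · -- bad (heavy) pattern : unique occurrence
        have hne : idx w = idx w' := by
          rcases not_and_or.mp hgood with hbad | hbad
          · have hheavy : (cnt u true (idx w) n : ℝ) = α * n + 1 :=
              heavy_char hdiscT (lt_of_not_ge hbad)
            exact heavy_pattern_unique hbal hdiscT hn hpatne hheavy
          · have hheavy : (cnt u false (idx w) n : ℝ) = (1 - α) * n + 1 :=
              heavy_char hdiscF (lt_of_not_ge hbad)
            exact heavy_pattern_unique hbal hdiscF hn hpatne hheavy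
        funext t
        rw [hidx w hw t, hidx w' hw' t, hne]
    have hfinT : ((Fac u n) ×ˢ ((Fac va ma) ×ˢ (Fac vb mb))).Finite :=
      (Set.toFinite (Fac u n)).prod (hA.prod hB)
    have hle := Set.ncard_le_ncard_of_injOn Φ hmapsto hinj hfinT
    rw [ncard_sprod, ncard_sprod] at hle
    have hu_le := balanced_fac_ncard hbal n
    calc (Fac v n).ncard ≤ (Fac u n).ncard * ((Fac va ma).ncard * (Fac vb mb).ncard) := hle
      _ ≤ (n + 1) * ((Fac va ma).ncard * (Fac vb mb).ncard) :=
          Nat.mul_le_mul_right _ hu_le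
      _ = (n + 1) * (Fac va ma).ncard * (Fac vb mb).ncard := by ring
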